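/- Let θ_1, θ_2 ∈ ℝ. Then VT^3_3(θ_1) is isomorphic to VT^3_3(θ_2) if and only if θ_1 + θ_2 ∈ πℤ or θ_1 − θ_2 ∈ πℤ. -/

import Mathlib

namespace QG

open Matrix

abbrev Mat (n : ℕ) := Matrix (Fin n) (Fin n) ℂ

/-- Conjugation `a ↦ u * a * uᴴ` as a linear map. -/
noncomputable def conjMap {n : ℕ} (u : Mat n) : Mat n →ₗ[ℂ] Mat n :=
  (LinearMap.mulLeft ℂ u).comp (LinearMap.mulRight ℂ uᴴ)

/-- Quantum graphs `R`, `S` are isomorphic if `u R uᴴ = S` for some unitary `u`. -/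
def Iso {n : ℕ} (R S : Submodule ℂ (Mat n)) : Prop :=
  ∃ u ∈ Matrix.unitaryGroup (Fin n) ℂ, R.map (conjMap u) = S

/-- `VT33 θ` is spanned by `√(3/2)(e₂₃+e₃₂)`, `√(3/2)(e₁₃+e₃₁)` and
`√(3/2)(e^{-iθ}e₁₂ + e^{iθ}e₂₁)`. -/
noncomputable def VT33 (θ : ℝ) : Submodule ℂ (Mat 3) :=
  Submodule.span ℂ
    { ((Real.sqrt (3/2) : ℝ) : ℂ) • !![0,0,0; 0,0,1; 0,1,0],
      ((Real.sqrt (3/2) : ℝ) : ℂ) • !![0,0,1; 0,0,0; 1,0,0],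
      ((Real.sqrt (3/2) : ℝ) : ℂ) • !![0, Complex.exp (-(θ : ℂ) * Complex.I), 0;
        Complex.exp ((θ : ℂ) * Complex.I), 0, 0; 0, 0, 0] }

/-! ### Generators -/

noncomputable def GG (v w : ℂ) : Fin 3 → Mat 3 :=
  ![((Real.sqrt (3/2) : ℝ) : ℂ) • !![0,0,0; 0,0,1; 0,1,0],
    ((Real.sqrt (3/2) : ℝ) : ℂ) • !![0,0,1; 0,0,0; 1,0,0],
    ((Real.sqrt (3/2) : ℝ) : ℂ) • !![0, v, 0; w, 0, 0; 0, 0, 0]]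

lemma VT33_eq (θ : ℝ) :
    VT33 θ = Submodule.span ℂ
      {GG (Complex.exp (-(θ : ℂ) * Complex.I)) (Complex.exp ((θ : ℂ) * Complex.I)) 0,
       GG (Complex.exp (-(θ : ℂ) * Complex.I)) (Complex.exp ((θ : ℂ) * Complex.I)) 1,
       GG (Complex.exp (-(θ : ℂ) * Complex.I)) (Complex.exp ((θ : ℂ) * Complex.I)) 2} := rfl

lemma s3sq : ((Real.sqrt 3 : ℝ) : ℂ)^2 = 3 := by
  rw [← Complex.ofReal_pow, Real.sq_sqrt (by norm_num)]; norm_num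
lemma s2sq : ((Real.sqrt 2 : ℝ) : ℂ)^2 = 2 := by
  rw [← Complex.ofReal_pow, Real.sq_sqrt (by norm_num)]; norm_num
lemma ssq : ((Real.sqrt (3/2) : ℝ) : ℂ) ^ 2 = 3/2 := by
  rw [← Complex.ofReal_pow, Real.sq_sqrt (by norm_num)]; norm_num
lemma ssix : ((Real.sqrt (3/2) : ℝ) : ℂ) ^ 6 = 27/8 := by
  rw [(by ring : ((Real.sqrt (3/2) : ℝ) : ℂ)^6 = (((Real.sqrt (3/2) : ℝ) : ℂ)^2)^3), ssq]
  norm_num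

set_option maxHeartbeats 1600000 in
lemma cube_sum (v w : ℂ) :
    ∑ i : Fin 3, ∑ j : Fin 3, ∑ k : Fin 3, (trace (GG v w i * GG v w j * GG v w k))^2
      = (81/8) * (v^2 + w^2) := by
  simp only [Fin.sum_univ_three, GG, Matrix.cons_val_zero, Matrix.cons_val_one,
    Matrix.head_cons, Matrix.cons_val_two, Matrix.tail_cons,
    smul_mul_assoc, mul_smul_comm, Matrix.mul_fin_three, Matrix.trace_fin_three_of,
    Matrix.trace_smul, smul_eq_mul]
  ring_nf
  linear_combination (w^2*3 + v^2*3) * ssix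

set_option maxHeartbeats 1600000 in
lemma gram (v w : ℂ) (hvw : v * w = 1) (i j : Fin 3) :
    trace (GG v w i * GG v w j) = if i = j then 3 else 0 := by
  fin_cases i <;> fin_cases j <;>
    (simp [GG, smul_mul_assoc, mul_smul_comm, Matrix.mul_fin_three,
        Matrix.trace_fin_three, Matrix.vecHead, Matrix.vecTail]
     try field_simp
     try ring_nf
     try linear_combination 2*s3sq - 3*s2sq
     try linear_combination 2*v*w*s3sq - 3*s2sq + 6*hvw)

/-! ### Orthogonal contraction machinery -/

lemma vec_orth (q : Fin 3 → Fin 3 → ℂ)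
    (hq : ∀ i i', (∑ a : Fin 3, q a i * q a i') = if i = i' then 1 else 0)
    (v : Fin 3 → ℂ) :
    ∑ a : Fin 3, (∑ i : Fin 3, q a i * v i)^2 = ∑ i : Fin 3, (v i)^2 := by
  have h00 := hq 0 0; have h01 := hq 0 1; have h02 := hq 0 2
  have h11 := hq 1 1; have h12 := hq 1 2; have h22 := hq 2 2
  simp only [Fin.sum_univ_three, if_pos, if_neg, show ((0:Fin 3) ≠ 1) from by decide,
    show ((0:Fin 3) ≠ 2) from by decide, show ((1:Fin 3) ≠ 2) from by decide,
    reduceIte] at h00 h01 h02 h11 h12 h22 ⊢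
  linear_combination (v 0)^2 * h00 + (v 1)^2 * h11 + (v 2)^2 * h22 +
    (2 * v 0 * v 1) * h01 + (2 * v 0 * v 2) * h02 + (2 * v 1 * v 2) * h12

lemma slot1 (q : Fin 3 → Fin 3 → ℂ)
    (hq : ∀ i i', (∑ a : Fin 3, q a i * q a i') = if i = i' then 1 else 0)
    (T : Fin 3 → Fin 3 → Fin 3 → ℂ) :
    ∑ a : Fin 3, ∑ b : Fin 3, ∑ c : Fin 3, (∑ i : Fin 3, q a i * T i b c)^2
      = ∑ i : Fin 3, ∑ b : Fin 3, ∑ c : Fin 3, (T i b c)^2 := by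
  have swap : ∀ (F : Fin 3 → Fin 3 → Fin 3 → ℂ),
      ∑ a : Fin 3, ∑ b : Fin 3, ∑ c : Fin 3, F a b c
        = ∑ b : Fin 3, ∑ c : Fin 3, ∑ a : Fin 3, F a b c := by
    intro F
    rw [Finset.sum_comm]
    exact Finset.sum_congr rfl fun b _ => Finset.sum_comm
  rw [swap, swap fun i b c => (T i b c)^2]
  exact Finset.sum_congr rfl fun b _ => Finset.sum_congr rfl fun c _ =>
    vec_orth q hq fun i => T i b c

lemma slot_pair (q : Fin 3 → Fin 3 → ℂ)
    (hq : ∀ i i', (∑ a : Fin 3, q a i * q a i') = if i = i' then 1 else 0)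
    (T : Fin 3 → Fin 3 → ℂ) :
    ∑ b : Fin 3, ∑ c : Fin 3, (∑ j : Fin 3, q b j * T j c)^2
      = ∑ j : Fin 3, ∑ c : Fin 3, (T j c)^2 := by
  rw [Finset.sum_comm (s := Finset.univ) (t := Finset.univ)
    (f := fun b c => (∑ j : Fin 3, q b j * T j c)^2)]
  rw [Finset.sum_comm (s := Finset.univ) (t := Finset.univ)
    (f := fun j c => (T j c)^2)]
  exact Finset.sum_congr rfl fun c _ => vec_orth q hq fun j => T j c

lemma key_contraction (q : Fin 3 → Fin 3 → ℂ)
    (hq : ∀ i i', (∑ a : Fin 3, q a i * q a i') = if i = i' then 1 else 0)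
    (t₁ t₂ : Fin 3 → Fin 3 → Fin 3 → ℂ)
    (h : ∀ a b c, t₁ a b c
      = ∑ i : Fin 3, ∑ j : Fin 3, ∑ k : Fin 3, q a i * q b j * q c k * t₂ i j k) :
    ∑ a : Fin 3, ∑ b : Fin 3, ∑ c : Fin 3, (t₁ a b c)^2
      = ∑ i : Fin 3, ∑ j : Fin 3, ∑ k : Fin 3, (t₂ i j k)^2 := by
  set T3 : Fin 3 → Fin 3 → Fin 3 → ℂ := fun i j c => ∑ k : Fin 3, q c k * t₂ i j k with hT3
  set T23 : Fin 3 → Fin 3 → Fin 3 → ℂ := fun i b c => ∑ j : Fin 3, q b j * T3 i j c with hT23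
  have h1 : ∀ a b c, t₁ a b c = ∑ i : Fin 3, q a i * T23 i b c := by
    intro a b c
    rw [h a b c]
    simp only [hT23, hT3, Finset.mul_sum]
    refine Finset.sum_congr rfl fun i _ => Finset.sum_congr rfl fun j _ =>
      Finset.sum_congr rfl fun k _ => by ring
  calc ∑ a : Fin 3, ∑ b : Fin 3, ∑ c : Fin 3, (t₁ a b c)^2
      = ∑ a : Fin 3, ∑ b : Fin 3, ∑ c : Fin 3, (∑ i : Fin 3, q a i * T23 i b c)^2 := by
        simp only [h1]
    _ = ∑ i : Fin 3, ∑ b : Fin 3, ∑ c : Fin 3, (T23 i b c)^2 := slot1 q hq _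
    _ = ∑ i : Fin 3, ∑ j : Fin 3, ∑ c : Fin 3, (T3 i j c)^2 := by
        refine Finset.sum_congr rfl fun i _ => ?_
        exact slot_pair q hq fun j c => T3 i j c
    _ = ∑ i : Fin 3, ∑ j : Fin 3, ∑ k : Fin 3, (t₂ i j k)^2 := by
        refine Finset.sum_congr rfl fun i _ => Finset.sum_congr rfl fun j _ => ?_
        exact vec_orth q hq fun k => t₂ i j k

/-! ### Trace expansions -/

lemma trace_mul_expand (n : Fin 3 → Mat 3) (c d : Fin 3 → ℂ) :
    trace ((∑ i : Fin 3, c i • n i) * (∑ j : Fin 3, d j • n j))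
      = ∑ i : Fin 3, ∑ j : Fin 3, c i * d j * trace (n i * n j) := by
  rw [Finset.sum_mul_sum]
  rw [Matrix.trace_sum]
  refine Finset.sum_congr rfl fun i _ => ?_
  rw [Matrix.trace_sum]
  refine Finset.sum_congr rfl fun j _ => ?_
  simp only [smul_mul_assoc, mul_smul_comm, smul_smul, Matrix.trace_smul, smul_eq_mul]
  ring

lemma trace_mul3_expand (n : Fin 3 → Mat 3) (c d e : Fin 3 → ℂ) :
    trace ((∑ i : Fin 3, c i • n i) * (∑ j : Fin 3, d j • n j) * (∑ k : Fin 3, e k • n k))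
      = ∑ i : Fin 3, ∑ j : Fin 3, ∑ k : Fin 3,
          c i * d j * e k * trace (n i * n j * n k) := by
  rw [Finset.sum_mul_sum, Finset.sum_mul]
  rw [Matrix.trace_sum]
  refine Finset.sum_congr rfl fun i _ => ?_
  rw [Finset.sum_mul, Matrix.trace_sum]
  refine Finset.sum_congr rfl fun j _ => ?_
  rw [Finset.mul_sum, Matrix.trace_sum]
  refine Finset.sum_congr rfl fun k _ => ?_
  simp only [smul_mul_assoc, mul_smul_comm, smul_smul, Matrix.trace_smul, smul_eq_mul]
  ring

/-! ### Span membership -/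

lemma mem_span_triple {y a b c : Mat 3} (h : y ∈ Submodule.span ℂ ({a, b, c} : Set (Mat 3))) :
    ∃ d : Fin 3 → ℂ, y = d 0 • a + d 1 • b + d 2 • c := by
  rw [show ({a, b, c} : Set (Mat 3)) = insert a (insert b {c}) from rfl] at h
  rcases Submodule.mem_span_insert.mp h with ⟨c₁, z, hz, rfl⟩
  rcases Submodule.mem_span_insert.mp hz with ⟨c₂, w, hw, rfl⟩
  rcases Submodule.mem_span_singleton.mp hw with ⟨c₃, rfl⟩
  exact ⟨![c₁, c₂, c₃], by simp [add_assoc]⟩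

/-! ### Conjugation lemmas -/

lemma conj_mul {u : Mat 3} (hu : uᴴ * u = 1) (A B : Mat 3) :
    (u * (A * uᴴ)) * (u * (B * uᴴ)) = u * ((A * B) * uᴴ) := by
  calc (u * (A * uᴴ)) * (u * (B * uᴴ)) = u * (A * ((uᴴ * u) * (B * uᴴ))) := by
        simp only [Matrix.mul_assoc]
    _ = u * ((A * B) * uᴴ) := by rw [hu]; simp only [Matrix.one_mul, Matrix.mul_assoc]

lemma trace_conj {u : Mat 3} (hu : uᴴ * u = 1) (A : Mat 3) :
    trace (u * (A * uᴴ)) = trace A := by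
  rw [Matrix.trace_mul_comm, Matrix.mul_assoc, hu, Matrix.mul_one]

/-! ### Forward direction : the invariant -/

lemma forward_cos (θ₁ θ₂ : ℝ) (h : Iso (VT33 θ₁) (VT33 θ₂)) :
    Real.cos (2*θ₁) = Real.cos (2*θ₂) := by
  obtain ⟨u, hu, hmap⟩ := h
  have huu : uᴴ * u = 1 := by
    have := (Matrix.mem_unitaryGroup_iff'.mp hu)
    simpa [Matrix.star_eq_conjTranspose] using this
  set v₁ := Complex.exp (-(θ₁ : ℂ) * Complex.I) with hv₁
  set w₁ := Complex.exp ((θ₁ : ℂ) * Complex.I) with hw₁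
  set v₂ := Complex.exp (-(θ₂ : ℂ) * Complex.I) with hv₂
  set w₂ := Complex.exp ((θ₂ : ℂ) * Complex.I) with hw₂
  have hvw₁ : v₁ * w₁ = 1 := by
    rw [hv₁, hw₁, ← Complex.exp_add]; ring_nf; exact Complex.exp_zero
  have hvw₂ : v₂ * w₂ = 1 := by
    rw [hv₂, hw₂, ← Complex.exp_add]; ring_nf; exact Complex.exp_zero
  set M : Fin 3 → Mat 3 := GG v₁ w₁ with hM
  set N : Fin 3 → Mat 3 := GG v₂ w₂ with hN
  set x : Fin 3 → Mat 3 := fun a => u * (M a * uᴴ) with hx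
  -- each x a lies in VT33 θ₂
  have hxmem : ∀ a, x a ∈ Submodule.span ℂ ({N 0, N 1, N 2} : Set (Mat 3)) := by
    intro a
    rw [← VT33_eq, ← hmap]
    refine Submodule.mem_map.mpr ⟨M a, ?_, by simp [conjMap, hx, Matrix.mul_assoc]⟩
    rw [VT33_eq θ₁]
    refine Submodule.subset_span ?_
    fin_cases a
    · exact Set.mem_insert _ _
    · exact Set.mem_insert_of_mem _ (Set.mem_insert _ _)
    · exact Set.mem_insert_of_mem _ (Set.mem_insert_of_mem _ rfl)
  -- coefficients
  have hcoef : ∀ a, ∃ d : Fin 3 → ℂ, x a = ∑ i : Fin 3, d i • N i := by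
    intro a
    obtain ⟨d, hd⟩ := mem_span_triple (hxmem a)
    exact ⟨d, by rw [hd, Fin.sum_univ_three]⟩
  choose q hxq using hcoef
  -- trace invariance
  have htr2 : ∀ a b, trace (x a * x b) = trace (M a * M b) := by
    intro a b
    rw [hx]
    simp only
    rw [conj_mul huu, trace_conj huu]
  have htr3 : ∀ a b c, trace (x a * x b * x c) = trace (M a * M b * M c) := by
    intro a b c
    rw [hx]
    simp only
    rw [conj_mul huu, conj_mul huu, trace_conj huu]
  -- orthogonality of q
  have horth0 : ∀ a b, (∑ i : Fin 3, q a i * q b i) = if a = b then 1 else 0 := by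
    intro a b
    have h1 : trace (x a * x b) = ∑ i : Fin 3, ∑ j : Fin 3, q a i * q b j * trace (N i * N j) := by
      rw [hxq a, hxq b]; exact trace_mul_expand N (q a) (q b)
    rw [htr2 a b, hM, gram v₁ w₁ hvw₁ a b] at h1
    have h2 : ∑ i : Fin 3, ∑ j : Fin 3, q a i * q b j * trace (N i * N j)
        = ∑ i : Fin 3, q a i * q b i * 3 := by
      refine Finset.sum_congr rfl fun i _ => ?_
      rw [Finset.sum_eq_single i]
      · rw [hN, gram v₂ w₂ hvw₂ i i, if_pos rfl]
      · intro j _ hj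
        rw [hN, gram v₂ w₂ hvw₂ i j, if_neg (Ne.symm hj), mul_zero]
      · intro hi; exact absurd (Finset.mem_univ i) hi
    rw [h2] at h1
    have h3 : (∑ i : Fin 3, q a i * q b i) * 3 = (if a = b then 1 else 0) * 3 := by
      rw [Finset.sum_mul]
      rw [← h1]
      split_ifs <;> norm_num
    have := mul_right_cancel₀ (show (3:ℂ) ≠ 0 by norm_num) h3
    exact this
  -- transpose orthogonality
  have horth : ∀ i i', (∑ a : Fin 3, q a i * q a i') = if i = i' then 1 else 0 := by
    set Q : Matrix (Fin 3) (Fin 3) ℂ := Matrix.of q with hQ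
    have hQQ : Q * Qᵀ = 1 := by
      ext a b
      rw [Matrix.mul_apply]
      simp only [hQ, Matrix.transpose_apply, Matrix.of_apply]
      rw [horth0 a b, Matrix.one_apply]
    have hQQ' : Qᵀ * Q = 1 := mul_eq_one_comm.mp hQQ
    intro i i'
    have : (Qᵀ * Q) i i' = (1 : Matrix (Fin 3) (Fin 3) ℂ) i i' := by rw [hQQ']
    rw [Matrix.mul_apply] at this
    simpa [hQ, Matrix.one_apply] using this
  -- cube expansion
  have hcube : ∀ a b c, trace (M a * M b * M c)
      = ∑ i : Fin 3, ∑ j : Fin 3, ∑ k : Fin 3,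
          q a i * q b j * q c k * trace (N i * N j * N k) := by
    intro a b c
    rw [← htr3 a b c, hxq a, hxq b, hxq c]
    exact trace_mul3_expand N (q a) (q b) (q c)
  have hkey := key_contraction q horth
    (fun a b c => trace (M a * M b * M c))
    (fun i j k => trace (N i * N j * N k)) hcube
  rw [hM, hN, cube_sum v₁ w₁, cube_sum v₂ w₂] at hkey
  have hsum : v₁^2 + w₁^2 = v₂^2 + w₂^2 := by
    field_simp at hkey
    linear_combination hkey
  -- convert to cosines
  have hc : ∀ θ : ℝ, Complex.exp (-(θ : ℂ) * Complex.I)^2 + Complex.exp ((θ : ℂ) * Complex.I)^2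
      = 2 * Complex.cos (2*θ) := by
    intro θ
    rw [show (-(θ:ℂ) * Complex.I) = (-θ:ℂ) * Complex.I by ring]
    rw [← Complex.exp_nat_mul, ← Complex.exp_nat_mul]
    rw [show ((2:ℕ) : ℂ) * ((-θ:ℂ) * Complex.I) = (-(2*θ):ℂ) * Complex.I by push_cast; ring]
    rw [show ((2:ℕ) : ℂ) * ((θ:ℂ) * Complex.I) = ((2*θ):ℂ) * Complex.I by push_cast; ring]
    rw [Complex.exp_mul_I, Complex.exp_mul_I]
    rw [Complex.cos_neg, Complex.sin_neg]
    ring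
  have hcc : Complex.cos (2*θ₁) = Complex.cos (2*θ₂) := by
    have h1 := hc θ₁
    have h2 := hc θ₂
    rw [hv₁, hw₁] at hsum
    rw [hv₂, hw₂] at hsum
    rw [h1, h2] at hsum
    have := mul_left_cancel₀ (show (2:ℂ) ≠ 0 by norm_num) hsum
    exact this
  have : ((Real.cos (2*θ₁) : ℝ) : ℂ) = ((Real.cos (2*θ₂) : ℝ) : ℂ) := by
    rw [Complex.ofReal_cos, Complex.ofReal_cos]
    exact_mod_cast hcc
  exact_mod_cast this

-- appended reverse-direction material
/-! ### Reverse direction -/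

lemma GG_ind0 (v w v' w' : ℂ) : GG v w 0 = GG v' w' 0 := by simp [GG]
lemma GG_ind1 (v w v' w' : ℂ) : GG v w 1 = GG v' w' 1 := by simp [GG]

lemma GG_third (v w ε : ℂ) : GG (ε*v) (ε*w) 2 = ε • GG v w 2 := by
  show ((Real.sqrt (3/2) : ℝ) : ℂ) • !![0, ε*v, 0; ε*w, 0, 0; 0, 0, 0]
      = ε • (((Real.sqrt (3/2) : ℝ) : ℂ) • !![0, v, 0; w, 0, 0; 0, 0, 0])
  rw [smul_comm]
  congr 1
  ext i j
  fin_cases i <;> fin_cases j <;> simp [Matrix.smul_apply, Matrix.vecHead, Matrix.vecTail]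

lemma span_third_smul (a b c : Mat 3) (ε : ℂ) (hε : ε * ε = 1) :
    Submodule.span ℂ ({a, b, ε • c} : Set (Mat 3))
      = Submodule.span ℂ ({a, b, c} : Set (Mat 3)) := by
  refine le_antisymm (Submodule.span_le.mpr ?_) (Submodule.span_le.mpr ?_)
  · rintro x (rfl | rfl | rfl)
    · exact Submodule.subset_span (by simp)
    · exact Submodule.subset_span (by simp)
    · exact Submodule.smul_mem _ ε (Submodule.subset_span (by simp))
  · rintro x hx
    simp only [Set.mem_insert_iff, Set.mem_singleton_iff] at hx
    rcases hx with h | h | h <;> rw [h]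
    · exact Submodule.subset_span (by simp)
    · exact Submodule.subset_span (by simp)
    · have h1 : ε • c ∈ Submodule.span ℂ ({a, b, ε • c} : Set (Mat 3)) :=
        Submodule.subset_span (by simp)
      have h2 := Submodule.smul_mem _ ε h1
      rwa [smul_smul, hε, one_smul] at h2

lemma eps_sq (k : ℤ) : Complex.exp ((k:ℂ) * Real.pi * Complex.I)
    * Complex.exp ((k:ℂ) * Real.pi * Complex.I) = 1 := by
  rw [← Complex.exp_add, show ((k:ℂ) * Real.pi * Complex.I + (k:ℂ) * Real.pi * Complex.I)
    = (k:ℂ) * (2 * Real.pi * Complex.I) by ring]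
  exact Complex.exp_int_mul_two_pi_mul_I k

lemma eps_neg (k : ℤ) : Complex.exp (-((k:ℂ) * Real.pi * Complex.I))
    = Complex.exp ((k:ℂ) * Real.pi * Complex.I) := by
  have h1 : Complex.exp (-((k:ℂ) * Real.pi * Complex.I))
      * Complex.exp ((k:ℂ) * Real.pi * Complex.I) = 1 := by
    rw [← Complex.exp_add]; simp
  calc Complex.exp (-((k:ℂ) * Real.pi * Complex.I))
      = Complex.exp (-((k:ℂ) * Real.pi * Complex.I))
        * (Complex.exp ((k:ℂ) * Real.pi * Complex.I)
          * Complex.exp ((k:ℂ) * Real.pi * Complex.I)) := by rw [eps_sq k, mul_one]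
    _ = (Complex.exp (-((k:ℂ) * Real.pi * Complex.I))
          * Complex.exp ((k:ℂ) * Real.pi * Complex.I))
        * Complex.exp ((k:ℂ) * Real.pi * Complex.I) := by ring
    _ = Complex.exp ((k:ℂ) * Real.pi * Complex.I) := by rw [h1, one_mul]

/-- If `θ₁ = θ₂ + kπ` then the subspaces are literally equal. -/
lemma VT33_congr (θ₁ θ₂ : ℝ) (k : ℤ) (hk : θ₁ - θ₂ = k * Real.pi) :
    VT33 θ₁ = VT33 θ₂ := by
  set ε := Complex.exp ((k:ℂ) * Real.pi * Complex.I) with hε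
  have hθ : (θ₁ : ℂ) = (θ₂ : ℂ) + (k:ℂ) * Real.pi := by
    have : θ₁ = θ₂ + k * Real.pi := by linarith
    rw [this]; push_cast; ring
  have hv : Complex.exp (-(θ₁:ℂ) * Complex.I) = ε * Complex.exp (-(θ₂:ℂ) * Complex.I) := by
    rw [hθ, show (-((θ₂:ℂ) + (k:ℂ) * Real.pi) * Complex.I)
      = (-((k:ℂ) * Real.pi * Complex.I)) + (-(θ₂:ℂ) * Complex.I) by ring,
      Complex.exp_add, eps_neg]
  have hw : Complex.exp ((θ₁:ℂ) * Complex.I) = ε * Complex.exp ((θ₂:ℂ) * Complex.I) := by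
    rw [hθ, show ((((θ₂:ℂ) + (k:ℂ) * Real.pi)) * Complex.I)
      = ((k:ℂ) * Real.pi * Complex.I) + ((θ₂:ℂ) * Complex.I) by ring,
      Complex.exp_add]
  rw [VT33_eq θ₁, VT33_eq θ₂, hv, hw]
  rw [show GG (ε * Complex.exp (-(θ₂:ℂ) * Complex.I)) (ε * Complex.exp ((θ₂:ℂ) * Complex.I)) 2
    = ε • GG (Complex.exp (-(θ₂:ℂ) * Complex.I)) (Complex.exp ((θ₂:ℂ) * Complex.I)) 2
    from GG_third _ _ ε]
  rw [GG_ind0 (ε * Complex.exp (-(θ₂:ℂ) * Complex.I)) (ε * Complex.exp ((θ₂:ℂ) * Complex.I))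
    (Complex.exp (-(θ₂:ℂ) * Complex.I)) (Complex.exp ((θ₂:ℂ) * Complex.I))]
  rw [GG_ind1 (ε * Complex.exp (-(θ₂:ℂ) * Complex.I)) (ε * Complex.exp ((θ₂:ℂ) * Complex.I))
    (Complex.exp (-(θ₂:ℂ) * Complex.I)) (Complex.exp ((θ₂:ℂ) * Complex.I))]
  exact span_third_smul _ _ _ ε (eps_sq k)

lemma iso_refl (θ : ℝ) : Iso (VT33 θ) (VT33 θ) := by
  refine ⟨1, ?_, ?_⟩
  · exact one_mem _
  · have : conjMap (1 : Mat 3) = LinearMap.id := by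
      apply LinearMap.ext
      intro m
      simp [conjMap]
    rw [this, Submodule.map_id]

lemma conjMap_one : conjMap (1 : Mat 3) = LinearMap.id := by
  apply LinearMap.ext
  intro m
  simp [conjMap]

lemma iso_of_eq {θ₁ θ₂ : ℝ} (h : VT33 θ₁ = VT33 θ₂) : Iso (VT33 θ₁) (VT33 θ₂) :=
  ⟨1, one_mem _, by rw [conjMap_one, Submodule.map_id, h]⟩

lemma swap_unitary : (!![0,1,0; 1,0,0; 0,0,1] : Mat 3) ∈ Matrix.unitaryGroup (Fin 3) ℂ := by
  rw [Matrix.mem_unitaryGroup_iff']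
  have hstar : star (!![0,1,0; 1,0,0; 0,0,1] : Mat 3) = !![0,1,0; 1,0,0; 0,0,1] := by
    ext i j
    fin_cases i <;> fin_cases j <;>
      simp [Matrix.star_apply, Matrix.vecHead, Matrix.vecTail]
  rw [hstar]
  ext i j
  fin_cases i <;> fin_cases j <;>
    simp [Matrix.mul_apply, Fin.sum_univ_three, Matrix.one_apply,
      Matrix.vecHead, Matrix.vecTail]

lemma swap_conj (X : Mat 3) :
    conjMap (!![0,1,0; 1,0,0; 0,0,1] : Mat 3) X
      = !![0,1,0; 1,0,0; 0,0,1] * (X * !![0,1,0; 1,0,0; 0,0,1]) := by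
  have hct : (!![0,1,0; 1,0,0; 0,0,1] : Mat 3)ᴴ = !![0,1,0; 1,0,0; 0,0,1] := by
    ext i j
    fin_cases i <;> fin_cases j <;>
      simp [Matrix.conjTranspose_apply, Matrix.vecHead, Matrix.vecTail]
  simp [conjMap, hct]

lemma iso_swap (θ : ℝ) : Iso (VT33 θ) (VT33 (-θ)) := by
  refine ⟨!![0,1,0; 1,0,0; 0,0,1], swap_unitary, ?_⟩
  set v := Complex.exp (-(θ:ℂ) * Complex.I) with hv
  set w := Complex.exp ((θ:ℂ) * Complex.I) with hw
  have hVTneg : VT33 (-θ) = Submodule.span ℂ ({GG w v 0, GG w v 1, GG w v 2} : Set (Mat 3)) := by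
    rw [VT33_eq (-θ)]
    rw [show (-(((-θ):ℝ):ℂ) * Complex.I) = (θ:ℂ) * Complex.I by push_cast; ring]
    rw [show ((((-θ):ℝ):ℂ) * Complex.I) = -(θ:ℂ) * Complex.I by push_cast; ring]
  have hc0 : conjMap (!![0,1,0; 1,0,0; 0,0,1] : Mat 3) (GG v w 0) = GG w v 1 := by
    rw [swap_conj]
    simp [GG, smul_mul_assoc, mul_smul_comm, Matrix.mul_fin_three,
      Matrix.vecHead, Matrix.vecTail]
    funext i
    fin_cases i <;> simp [Matrix.vecHead, Matrix.vecTail]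
  have hc1 : conjMap (!![0,1,0; 1,0,0; 0,0,1] : Mat 3) (GG v w 1) = GG w v 0 := by
    rw [swap_conj]
    simp [GG, smul_mul_assoc, mul_smul_comm, Matrix.mul_fin_three,
      Matrix.vecHead, Matrix.vecTail]
    funext i
    fin_cases i <;> simp [Matrix.vecHead, Matrix.vecTail]
  have hc2 : conjMap (!![0,1,0; 1,0,0; 0,0,1] : Mat 3) (GG v w 2) = GG w v 2 := by
    rw [swap_conj]
    simp [GG, smul_mul_assoc, mul_smul_comm, Matrix.mul_fin_three,
      Matrix.vecHead, Matrix.vecTail]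
    funext i
    fin_cases i <;> simp [Matrix.vecHead, Matrix.vecTail]
  rw [VT33_eq θ, hVTneg, Submodule.map_span]
  rw [Set.image_insert_eq, Set.image_insert_eq, Set.image_singleton, hc0, hc1, hc2]
  rw [Set.insert_comm]

/-- `VT33 θ₁ ≅ VT33 θ₂` iff `θ₁ + θ₂ ∈ πℤ` or `θ₁ - θ₂ ∈ πℤ`. -/
theorem stmt12 (θ₁ θ₂ : ℝ) :
    Iso (VT33 θ₁) (VT33 θ₂) ↔
      ((∃ k : ℤ, θ₁ + θ₂ = k * Real.pi) ∨ (∃ k : ℤ, θ₁ - θ₂ = k * Real.pi)) := by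
  constructor
  · intro h
    have hcos := forward_cos θ₁ θ₂ h
    rw [Real.cos_eq_cos_iff] at hcos
    obtain ⟨k, hk | hk⟩ := hcos
    · right
      refine ⟨-k, ?_⟩
      push_cast
      linarith
    · left
      exact ⟨k, by linarith⟩
  · rintro (⟨k, hk⟩ | ⟨k, hk⟩)
    · have h2 : VT33 (-θ₁) = VT33 θ₂ := by
        refine VT33_congr (-θ₁) θ₂ (-k) ?_
        push_cast
        linarith
      have h3 := iso_swap θ₁
      rwa [h2] at h3
    · exact iso_of_eq (VT33_congr θ₁ θ₂ k hk)

end QG
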